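/- Let D ≥ 1 be a real number, and let d = p₁⋯p_r be a product of primes p₁ ≥ p₂ ≥ ⋯ ≥ p_r such that p₁⋯p_{j−1}·p_j² ≤ D for every 1 ≤ j ≤ r. Then for any reals D₁, D₂ ≥ 1 with D₁·D₂ ≥ D, there exists a factorization d = d₁·d₂ into positive integers with d₁ ≤ D₁ and d₂ ≤ D₂. -/

import Mathlib

open scoped BigOperators

/-- Greedy two-factor factorization in the well-factorable support: if
`d = p₁⋯p_r` with primes `p₁ ≥ ⋯ ≥ p_r` and `p₁⋯p_{j−1}·p_j² ≤ D` for all `j ≤ r`,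
then for any `D₁, D₂ ≥ 1` with `D ≤ D₁·D₂` there is a factorization `d = d₁·d₂` into
positive integers with `d₁ ≤ D₁` and `d₂ ≤ D₂`. -/
theorem wellFactorable_two_factor (D : ℝ) (hD : 1 ≤ D) (r : ℕ) (p : Fin r → ℕ)
    (hp : ∀ i, (p i).Prime) (hmono : ∀ i j : Fin r, i ≤ j → p j ≤ p i)
    (hwell : ∀ j : Fin r,
      ((∏ i ∈ Finset.univ.filter (· < j), p i : ℕ) : ℝ) * (p j : ℝ) ^ 2 ≤ D)
    (D₁ D₂ : ℝ) (hD₁ : 1 ≤ D₁) (hD₂ : 1 ≤ D₂) (hDD : D ≤ D₁ * D₂) :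
    ∃ d₁ d₂ : ℕ, 0 < d₁ ∧ 0 < d₂ ∧ d₁ * d₂ = ∏ i, p i ∧
      (d₁ : ℝ) ≤ D₁ ∧ (d₂ : ℝ) ≤ D₂ := by
  have key : ∀ k : ℕ, k ≤ r → ∃ d₁ d₂ : ℕ, 0 < d₁ ∧ 0 < d₂ ∧
      d₁ * d₂ = ∏ i ∈ Finset.univ.filter (fun i : Fin r => i.val < k), p i ∧
      (d₁ : ℝ) ≤ D₁ ∧ (d₂ : ℝ) ≤ D₂ := by
    intro k
    induction k with
    | zero =>
      intro _
      exact ⟨1, 1, one_pos, one_pos, by simp, by simpa using hD₁, by simpa using hD₂⟩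
    | succ k ih =>
      intro hk
      obtain ⟨d₁, d₂, h1, h2, hprod, hle1, hle2⟩ := ih (Nat.le_of_succ_le hk)
      have hkr : k < r := hk
      set j : Fin r := ⟨k, hkr⟩ with hj
      have hpj : 0 < p j := (hp j).pos
      have hset : Finset.univ.filter (fun i : Fin r => i.val < k + 1)
          = insert j (Finset.univ.filter (fun i : Fin r => i.val < k)) := by
        ext i
        simp only [Finset.mem_filter, Finset.mem_insert, Finset.mem_univ, true_and, hj,
          Fin.ext_iff]
        omega
      have hprod' : (∏ i ∈ Finset.univ.filter (fun i : Fin r => i.val < k + 1), p i)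
          = p j * ∏ i ∈ Finset.univ.filter (fun i : Fin r => i.val < k), p i := by
        rw [hset, Finset.prod_insert (by simp [hj])]
      have hfilter : Finset.univ.filter (· < j)
          = Finset.univ.filter (fun i : Fin r => i.val < k) := by
        apply Finset.filter_congr
        intro i _
        simp [Fin.lt_def, hj]
      have hwj := hwell j
      rw [hfilter, ← hprod] at hwj
      push_cast at hwj
      -- key inequality : (d₁ * p j) * (d₂ * p j) ≤ D₁ * D₂
      have hineq : ((d₁ : ℝ) * p j) * ((d₂ : ℝ) * p j) ≤ D₁ * D₂ := by
        calc ((d₁ : ℝ) * p j) * ((d₂ : ℝ) * p j)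
            = (d₁ : ℝ) * d₂ * (p j : ℝ) ^ 2 := by ring
          _ ≤ D := hwj
          _ ≤ D₁ * D₂ := hDD
      have hpos1 : (0 : ℝ) < (d₁ : ℝ) * p j := by positivity
      have hpos2 : (0 : ℝ) < (d₂ : ℝ) * p j := by positivity
      have hcase : (d₁ : ℝ) * p j ≤ D₁ ∨ (d₂ : ℝ) * p j ≤ D₂ := by
        by_contra h
        push_neg at h
        have := mul_lt_mul'' h.1 h.2 (by linarith) (by linarith)
        linarith
      rcases hcase with hc | hc
      · refine ⟨d₁ * p j, d₂, Nat.mul_pos h1 hpj, h2, ?_, by push_cast; exact hc, hle2⟩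
        rw [hprod']
        rw [← hprod]; ring
      · refine ⟨d₁, d₂ * p j, h1, Nat.mul_pos h2 hpj, ?_, hle1, by push_cast; exact hc⟩
        rw [hprod']
        rw [← hprod]; ring
  obtain ⟨d₁, d₂, h1, h2, hprod, hle1, hle2⟩ := key r le_rfl
  refine ⟨d₁, d₂, h1, h2, ?_, hle1, hle2⟩
  rw [hprod]
  apply Finset.prod_congr _ (fun _ _ => rfl)
  ext i
  simp [i.isLt]
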